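/- Dual-increment bound (Lemma 3.1(iii), standalone form): Let (U^k, V^k, λ^k) and (U^{k+1}, V^{k+1}, λ^{k+1}) satisfy the optimality equations ∇f(V^j(U^j)ᵀ)U^j + Σ_{i=1}^m λ^j_i A_i U^j − γ(U^j − V^j) = 0 for j = k and j = k+1. Suppose ‖U^j‖_F ≤ δ and ‖V^j‖_F ≤ δ for j = k, k+1, σ_min(𝒞(U^k)) ≥ η and σ_min(𝒞(U^{k+1})) ≥ η for some η > 0, ‖∇f(X)‖_F ≤ L_f and ‖∇f(X) − ∇f(Y)‖_F ≤ L‖X − Y‖_F for all X, Y with ‖X‖_F, ‖Y‖_F ≤ δ². Then ‖λ^{k+1} − λ^k‖_2² ≤ c₁‖U^{k+1} − U^k‖_F² + c₂‖V^{k+1} − V^k‖_F², where c₁ = (2/η²)(Lδ² + L_f + γ + (1/η)L_f δ√(s_A) + (2/η)γδ√(s_A))² and c₂ = (2/η²)(Lδ² + γ)². -/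

import Mathlib

open Matrix
open scoped BigOperators

noncomputable section

/-- Frobenius inner product of two real matrices. -/
def frobInner {α β : Type*} [Fintype α] [Fintype β] (X Y : Matrix α β ℝ) : ℝ :=
  ∑ i, ∑ j, X i j * Y i j

/-- Frobenius norm of a real matrix. -/
def frobNorm {α β : Type*} [Fintype α] [Fintype β] (X : Matrix α β ℝ) : ℝ :=
  Real.sqrt (∑ i, ∑ j, (X i j) ^ 2)

/-- Euclidean norm of a real vector. -/
def vecNorm {α : Type*} [Fintype α] (v : α → ℝ) : ℝ :=
  Real.sqrt (∑ i, (v i) ^ 2)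

/-- The linear map `𝒜(X) = (⟨A 1, X⟩, …, ⟨A m, X⟩)`. -/
def Aop {n m : ℕ} (A : Fin m → Matrix (Fin n) (Fin n) ℝ)
    (X : Matrix (Fin n) (Fin n) ℝ) : Fin m → ℝ :=
  fun i => frobInner (A i) X

/-- `s_A = Σ_i ‖A_i‖_F²`. -/
def sA {n m : ℕ} (A : Fin m → Matrix (Fin n) (Fin n) ℝ) : ℝ :=
  ∑ i, (frobNorm (A i)) ^ 2

/-- `(U, V, λ)` is an ε-KKT point of the penalized problem
`min f(UVᵀ) + (γ/2)‖U-V‖² s.t. 𝒜(UVᵀ) = b`, where `grad` denotes the gradient of `f`. -/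
def IsPenEpsKKT {n m r : ℕ} (grad : Matrix (Fin n) (Fin n) ℝ → Matrix (Fin n) (Fin n) ℝ)
    (A : Fin m → Matrix (Fin n) (Fin n) ℝ) (b : Fin m → ℝ) (γ ε : ℝ)
    (U V : Matrix (Fin n) (Fin r) ℝ) (lam : Fin m → ℝ) : Prop :=
  frobNorm (grad (U * Vᵀ) * V + γ • (U - V) + ∑ i, lam i • (A i * V)) ≤ ε ∧
  frobNorm (grad (V * Uᵀ) * U + γ • (V - U) + ∑ i, lam i • (A i * U)) ≤ ε ∧
  vecNorm (fun i => Aop A (U * Vᵀ) i - b i) ≤ ε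

/-- `(U, λ)` is an ε-KKT point of the Burer–Monteiro problem
`min f(UUᵀ) s.t. 𝒜(UUᵀ) = b`, where `grad` denotes the gradient of `f`. -/
def IsBMEpsKKT {n m r : ℕ} (grad : Matrix (Fin n) (Fin n) ℝ → Matrix (Fin n) (Fin n) ℝ)
    (A : Fin m → Matrix (Fin n) (Fin n) ℝ) (b : Fin m → ℝ) (ε : ℝ)
    (U : Matrix (Fin n) (Fin r) ℝ) (lam : Fin m → ℝ) : Prop :=
  frobNorm ((2 : ℝ) • (grad (U * Uᵀ) * U) + ∑ i, lam i • (A i * U)) ≤ ε ∧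
  vecNorm (fun i => Aop A (U * Uᵀ) i - b i) ≤ ε

/-- The augmented Lagrangian `L_ρ(U,V,λ)` of the penalized problem. -/
def augL {n m r : ℕ} (f : Matrix (Fin n) (Fin n) ℝ → ℝ)
    (A : Fin m → Matrix (Fin n) (Fin n) ℝ) (b : Fin m → ℝ) (ρ γ : ℝ)
    (U V : Matrix (Fin n) (Fin r) ℝ) (lam : Fin m → ℝ) : ℝ :=
  f (U * Vᵀ) + γ / 2 * (frobNorm (U - V)) ^ 2
    + ∑ i, lam i * (Aop A (U * Vᵀ) i - b i)
    + ρ / 2 * (vecNorm (fun i => Aop A (U * Vᵀ) i - b i)) ^ 2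

/-- The level set `S_β` of the penalty function. -/
def Sset {n m r : ℕ} (f : Matrix (Fin n) (Fin n) ℝ → ℝ)
    (A : Fin m → Matrix (Fin n) (Fin n) ℝ) (b : Fin m → ℝ) (ρ₀ β : ℝ) :
    Set (Matrix (Fin n) (Fin r) ℝ × Matrix (Fin n) (Fin r) ℝ) :=
  {p | f (p.1 * p.2ᵀ) + ρ₀ / 2 * (frobNorm (p.1 - p.2)) ^ 2
      + ρ₀ / 2 * (vecNorm (fun i => Aop A (p.1 * p.2ᵀ) i - b i)) ^ 2 ≤ β}

/-- `𝒞(U)`: the `nr × m` matrix whose `i`-th column is the vectorization of `A_i U`. -/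
def Cmat {n m r : ℕ} (A : Fin m → Matrix (Fin n) (Fin n) ℝ)
    (U : Matrix (Fin n) (Fin r) ℝ) : Matrix (Fin n × Fin r) (Fin m) ℝ :=
  Matrix.of fun p i => (A i * U) p.1 p.2

/-- Smallest singular value of a real matrix, as the infimum of `‖Mx‖` over unit vectors. -/
def sigmaMin {α β : Type*} [Fintype α] [Fintype β] (M : Matrix α β ℝ) : ℝ :=
  sInf {s | ∃ x : β → ℝ, vecNorm x = 1 ∧ s = vecNorm (M.mulVec x)}

/-- Norm of the full gradient of the augmented Lagrangian at `(U, V, λ)`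
(for symmetric `f`, with `grad` the gradient of `f`). -/
def gradAugLNorm {n m r : ℕ} (grad : Matrix (Fin n) (Fin n) ℝ → Matrix (Fin n) (Fin n) ℝ)
    (A : Fin m → Matrix (Fin n) (Fin n) ℝ) (b : Fin m → ℝ) (ρ γ : ℝ)
    (U V : Matrix (Fin n) (Fin r) ℝ) (lam : Fin m → ℝ) : ℝ :=
  Real.sqrt
    ((frobNorm (grad (U * Vᵀ) * V + γ • (U - V)
        + ∑ i, (lam i + ρ * (Aop A (U * Vᵀ) i - b i)) • (A i * V))) ^ 2
      + (frobNorm (grad (V * Uᵀ) * U + γ • (V - U)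
        + ∑ i, (lam i + ρ * (Aop A (U * Vᵀ) i - b i)) • (A i * U))) ^ 2
      + (vecNorm (fun i => Aop A (U * Vᵀ) i - b i)) ^ 2)

/-- Distance between two primal-dual triples, induced by the Frobenius/Euclidean norms. -/
def tripDist {n m r : ℕ}
    (p q : Matrix (Fin n) (Fin r) ℝ × Matrix (Fin n) (Fin r) ℝ × (Fin m → ℝ)) : ℝ :=
  Real.sqrt ((frobNorm (p.1 - q.1)) ^ 2 + (frobNorm (p.2.1 - q.2.1)) ^ 2
    + (vecNorm (fun i => p.2.2 i - q.2.2 i)) ^ 2)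

/-- The set `𝒲` of KKT points of the penalized problem. -/
def KKTset {n m : ℕ} (r : ℕ) (grad : Matrix (Fin n) (Fin n) ℝ → Matrix (Fin n) (Fin n) ℝ)
    (A : Fin m → Matrix (Fin n) (Fin n) ℝ) (b : Fin m → ℝ) (γ : ℝ) :
    Set (Matrix (Fin n) (Fin r) ℝ × Matrix (Fin n) (Fin r) ℝ × (Fin m → ℝ)) :=
  {p | IsPenEpsKKT grad A b γ 0 p.1 p.2.1 p.2.2}

attribute [local instance] Matrix.frobeniusSeminormedAddCommGroup Matrix.frobeniusNormedSpace

section Helpers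

variable {α β : Type*} [Fintype α] [Fintype β]

lemma frobNorm_eq (X : Matrix α β ℝ) : frobNorm X = ‖X‖ := by
  rw [frobNorm, Matrix.frobenius_norm_def, Real.sqrt_eq_rpow]
  congr 1
  refine Finset.sum_congr rfl fun i _ => Finset.sum_congr rfl fun j _ => ?_
  rw [Real.norm_eq_abs, show ((2:ℝ)) = ((2:ℕ):ℝ) by norm_num, Real.rpow_natCast, sq_abs]

lemma vecNorm_nonneg (v : α → ℝ) : 0 ≤ vecNorm v := Real.sqrt_nonneg _

lemma frobNorm_nonneg (X : Matrix α β ℝ) : 0 ≤ frobNorm X := Real.sqrt_nonneg _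

lemma vecNorm_smul (c : ℝ) (v : α → ℝ) : vecNorm (c • v) = |c| * vecNorm v := by
  simp only [vecNorm, Pi.smul_apply, smul_eq_mul, mul_pow]
  rw [← Finset.mul_sum, Real.sqrt_mul (sq_nonneg c), Real.sqrt_sq_eq_abs]

lemma vecNorm_mulVec_Cmat {n m r : ℕ} (A : Fin m → Matrix (Fin n) (Fin n) ℝ)
    (U : Matrix (Fin n) (Fin r) ℝ) (x : Fin m → ℝ) :
    vecNorm ((Cmat A U).mulVec x) = frobNorm (∑ i, x i • (A i * U)) := by
  rw [vecNorm, frobNorm]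
  congr 1
  rw [Fintype.sum_prod_type]
  refine Finset.sum_congr rfl fun i _ => Finset.sum_congr rfl fun j _ => ?_
  congr 1
  simp only [Matrix.mulVec, dotProduct, Cmat, Matrix.of_apply, Matrix.sum_apply,
    Matrix.smul_apply, smul_eq_mul]
  exact Finset.sum_congr rfl fun i _ => mul_comm _ _

lemma sigmaMin_bound {M : Matrix α β ℝ} {η : ℝ} (hη : 0 ≤ η)
    (h : η ≤ sigmaMin M) (x : β → ℝ) :
    η * vecNorm x ≤ vecNorm (M.mulVec x) := by
  by_cases hx : vecNorm x = 0
  · rw [hx, mul_zero]; exact vecNorm_nonneg _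
  · have hpos : 0 < vecNorm x := lt_of_le_of_ne (vecNorm_nonneg x) (Ne.symm hx)
    set c : ℝ := vecNorm x with hc
    have hunit : vecNorm (c⁻¹ • x) = 1 := by
      rw [vecNorm_smul, abs_of_pos (inv_pos.mpr hpos), inv_mul_cancel₀ (ne_of_gt hpos)]
    have hbdd : BddBelow {s | ∃ y : β → ℝ, vecNorm y = 1 ∧ s = vecNorm (M.mulVec y)} := by
      refine ⟨0, fun s hs => ?_⟩
      obtain ⟨y, _, rfl⟩ := hs
      exact vecNorm_nonneg _
    have hmem : vecNorm (M.mulVec (c⁻¹ • x)) ∈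
        {s | ∃ y : β → ℝ, vecNorm y = 1 ∧ s = vecNorm (M.mulVec y)} := ⟨_, hunit, rfl⟩
    have hle : η ≤ vecNorm (M.mulVec (c⁻¹ • x)) := le_trans h (csInf_le hbdd hmem)
    rw [Matrix.mulVec_smul, vecNorm_smul, abs_of_pos (inv_pos.mpr hpos)] at hle
    calc η * c ≤ (c⁻¹ * vecNorm (M.mulVec x)) * c := by
          exact mul_le_mul_of_nonneg_right hle (le_of_lt hpos)
      _ = vecNorm (M.mulVec x) := by field_simp
end Helpers

lemma frobNorm_sum_smul_le {n m r : ℕ} (A : Fin m → Matrix (Fin n) (Fin n) ℝ)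
    (U : Matrix (Fin n) (Fin r) ℝ) (lam : Fin m → ℝ) :
    frobNorm (∑ i, lam i • (A i * U))
      ≤ vecNorm lam * Real.sqrt (sA A) * frobNorm U := by
  rw [frobNorm_eq, frobNorm_eq]
  calc ‖∑ i, lam i • (A i * U)‖ ≤ ∑ i, ‖lam i • (A i * U)‖ := norm_sum_le _ _
    _ ≤ ∑ i, |lam i| * (‖A i‖ * ‖U‖) := by
        refine Finset.sum_le_sum fun i _ => ?_
        rw [norm_smul, Real.norm_eq_abs]
        exact mul_le_mul_of_nonneg_left (Matrix.frobenius_norm_mul _ _) (abs_nonneg _)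
    _ = (∑ i, |lam i| * ‖A i‖) * ‖U‖ := by rw [Finset.sum_mul]; simp [mul_assoc]
    _ ≤ (vecNorm lam * Real.sqrt (sA A)) * ‖U‖ := by
        refine mul_le_mul_of_nonneg_right ?_ (norm_nonneg _)
        have h := Finset.sum_mul_sq_le_sq_mul_sq Finset.univ
          (fun i => |lam i|) (fun i => ‖A i‖)
        have h2 : (∑ i, |lam i| * ‖A i‖) = Real.sqrt ((∑ i, |lam i| * ‖A i‖) ^ 2) :=
          (Real.sqrt_sq (Finset.sum_nonneg fun i _ =>
            mul_nonneg (abs_nonneg _) (norm_nonneg _))).symm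
        rw [h2, vecNorm, sA,
          ← Real.sqrt_mul (Finset.sum_nonneg fun i _ => sq_nonneg _)]
        apply Real.sqrt_le_sqrt
        simpa [sq_abs, frobNorm_eq] using h
set_option maxHeartbeats 1600000 in
/-- Lemma 3.1(iii), standalone form: dual-increment bound. -/
theorem dual_increment_bound
    (n m r : ℕ) (hn : 0 < n) (hm : 0 < m) (hr : 0 < r)
    (f : Matrix (Fin n) (Fin n) ℝ → ℝ)
    (grad : Matrix (Fin n) (Fin n) ℝ → Matrix (Fin n) (Fin n) ℝ)
    (hgrad : ∀ X H : Matrix (Fin n) (Fin n) ℝ,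
      HasDerivAt (fun t : ℝ => f (X + t • H)) (frobInner (grad X) H) 0)
    (hgradCont : Continuous grad)
    (A : Fin m → Matrix (Fin n) (Fin n) ℝ) (hAsym : ∀ i, (A i)ᵀ = A i)
    (γ δ Lf L η : ℝ) (hγ : 0 < γ) (hδ : 0 < δ) (hLf : 0 < Lf) (hL : 0 < L) (hη : 0 < η)
    (Uk Vk Uk1 Vk1 : Matrix (Fin n) (Fin r) ℝ) (lamk lamk1 : Fin m → ℝ)
    (hstatk : grad (Vk * Ukᵀ) * Uk + (∑ i, lamk i • (A i * Uk)) - γ • (Uk - Vk) = 0)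
    (hstatk1 : grad (Vk1 * Uk1ᵀ) * Uk1 + (∑ i, lamk1 i • (A i * Uk1)) - γ • (Uk1 - Vk1) = 0)
    (hUk : frobNorm Uk ≤ δ) (hVk : frobNorm Vk ≤ δ)
    (hUk1 : frobNorm Uk1 ≤ δ) (hVk1 : frobNorm Vk1 ≤ δ)
    (hsmink : η ≤ sigmaMin (Cmat A Uk)) (hsmink1 : η ≤ sigmaMin (Cmat A Uk1))
    (hgradB : ∀ X : Matrix (Fin n) (Fin n) ℝ, frobNorm X ≤ δ ^ 2 → frobNorm (grad X) ≤ Lf)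
    (hgradLip : ∀ X Y : Matrix (Fin n) (Fin n) ℝ, frobNorm X ≤ δ ^ 2 → frobNorm Y ≤ δ ^ 2 →
      frobNorm (grad X - grad Y) ≤ L * frobNorm (X - Y))
    (c₁ c₂ : ℝ)
    (hc₁ : c₁ = 2 / η ^ 2 * (L * δ ^ 2 + Lf + γ + 1 / η * Lf * δ * Real.sqrt (sA A)
      + 2 / η * γ * δ * Real.sqrt (sA A)) ^ 2)
    (hc₂ : c₂ = 2 / η ^ 2 * (L * δ ^ 2 + γ) ^ 2) :
    (vecNorm (fun i => lamk1 i - lamk i)) ^ 2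
      ≤ c₁ * (frobNorm (Uk1 - Uk)) ^ 2 + c₂ * (frobNorm (Vk1 - Vk)) ^ 2 := by
  rw [sub_eq_zero] at hstatk hstatk1
  set G1 := grad (Vk1 * Uk1ᵀ) with hG1def
  set Gk := grad (Vk * Ukᵀ) with hGkdef
  have e1 : (∑ i, lamk1 i • (A i * Uk1)) = γ • (Uk1 - Vk1) - G1 * Uk1 :=
    eq_sub_of_add_eq' hstatk1
  have e2 : (∑ i, lamk i • (A i * Uk)) = γ • (Uk - Vk) - Gk * Uk :=
    eq_sub_of_add_eq' hstatk
  have key : (∑ i, (lamk1 i - lamk i) • (A i * Uk1))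
      = γ • (Uk1 - Uk) - γ • (Vk1 - Vk) - (G1 - Gk) * Uk1
        - Gk * (Uk1 - Uk) - (∑ i, lamk i • (A i * (Uk1 - Uk))) := by
    have hsum : (∑ i, (lamk1 i - lamk i) • (A i * Uk1))
        = (∑ i, lamk1 i • (A i * Uk1)) - (∑ i, lamk i • (A i * Uk))
          - (∑ i, lamk i • (A i * (Uk1 - Uk))) := by
      rw [← Finset.sum_sub_distrib, ← Finset.sum_sub_distrib]
      refine Finset.sum_congr rfl fun i _ => ?_
      rw [Matrix.mul_sub, smul_sub, sub_smul]
      abel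
    rw [hsum, e1, e2]
    simp only [smul_sub, Matrix.sub_mul, Matrix.mul_sub]
    abel
  -- norm versions of hypotheses
  rw [frobNorm_eq] at hUk hVk hUk1 hVk1
  have hB : ∀ X : Matrix (Fin n) (Fin n) ℝ, ‖X‖ ≤ δ ^ 2 → ‖grad X‖ ≤ Lf := by
    intro X hX
    have := hgradB X (by rwa [frobNorm_eq]); rwa [frobNorm_eq] at this
  have hLip : ∀ X Y : Matrix (Fin n) (Fin n) ℝ, ‖X‖ ≤ δ ^ 2 → ‖Y‖ ≤ δ ^ 2 →
      ‖grad X - grad Y‖ ≤ L * ‖X - Y‖ := by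
    intro X Y hX hY
    have := hgradLip X Y (by rwa [frobNorm_eq]) (by rwa [frobNorm_eq])
    rwa [frobNorm_eq, frobNorm_eq] at this
  set a : ℝ := ‖Uk1 - Uk‖ with hadef
  set b : ℝ := ‖Vk1 - Vk‖ with hbdef
  have ha0 : 0 ≤ a := norm_nonneg _
  have hb0 : 0 ≤ b := norm_nonneg _
  have hprod : ∀ (V U : Matrix (Fin n) (Fin r) ℝ), ‖V‖ ≤ δ → ‖U‖ ≤ δ →
      ‖V * Uᵀ‖ ≤ δ ^ 2 := by
    intro V U hV hU
    calc ‖V * Uᵀ‖ ≤ ‖V‖ * ‖Uᵀ‖ := Matrix.frobenius_norm_mul _ _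
      _ ≤ δ * δ := by
          rw [Matrix.frobenius_norm_transpose]
          exact mul_le_mul hV hU (norm_nonneg _) hδ.le
      _ = δ ^ 2 := (sq δ).symm
  have hGkb : ‖Gk‖ ≤ Lf := hB _ (hprod _ _ hVk hUk)
  have hdiff : ‖Vk1 * Uk1ᵀ - Vk * Ukᵀ‖ ≤ δ * a + δ * b := by
    have hid : Vk1 * Uk1ᵀ - Vk * Ukᵀ = (Vk1 - Vk) * Uk1ᵀ + Vk * (Uk1 - Uk)ᵀ := by
      rw [Matrix.transpose_sub, Matrix.sub_mul, Matrix.mul_sub]; abel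
    rw [hid]
    calc ‖(Vk1 - Vk) * Uk1ᵀ + Vk * (Uk1 - Uk)ᵀ‖
        ≤ ‖(Vk1 - Vk) * Uk1ᵀ‖ + ‖Vk * (Uk1 - Uk)ᵀ‖ := norm_add_le _ _
      _ ≤ ‖Vk1 - Vk‖ * ‖Uk1ᵀ‖ + ‖Vk‖ * ‖(Uk1 - Uk)ᵀ‖ :=
          add_le_add (Matrix.frobenius_norm_mul _ _) (Matrix.frobenius_norm_mul _ _)
      _ = b * ‖Uk1‖ + ‖Vk‖ * a := by
          rw [Matrix.frobenius_norm_transpose, Matrix.frobenius_norm_transpose]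
      _ ≤ b * δ + δ * a := by
          apply add_le_add
          · exact mul_le_mul_of_nonneg_left hUk1 hb0
          · exact mul_le_mul_of_nonneg_right hVk ha0
      _ = δ * a + δ * b := by ring
  have hG1Gk : ‖G1 - Gk‖ ≤ L * (δ * a + δ * b) := by
    calc ‖G1 - Gk‖ ≤ L * ‖Vk1 * Uk1ᵀ - Vk * Ukᵀ‖ :=
          hLip _ _ (hprod _ _ hVk1 hUk1) (hprod _ _ hVk hUk)
      _ ≤ L * (δ * a + δ * b) := mul_le_mul_of_nonneg_left hdiff hL.le
  -- bound on ‖lamk‖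
  have hlamk : vecNorm lamk ≤ (Lf * δ + 2 * γ * δ) / η := by
    have h0 : η * vecNorm lamk ≤ vecNorm ((Cmat A Uk).mulVec lamk) :=
      sigmaMin_bound hη.le hsmink lamk
    rw [vecNorm_mulVec_Cmat, e2, frobNorm_eq] at h0
    have h1 : ‖γ • (Uk - Vk) - Gk * Uk‖ ≤ Lf * δ + 2 * γ * δ := by
      calc ‖γ • (Uk - Vk) - Gk * Uk‖ ≤ ‖γ • (Uk - Vk)‖ + ‖Gk * Uk‖ := norm_sub_le _ _
        _ ≤ |γ| * ‖Uk - Vk‖ + ‖Gk‖ * ‖Uk‖ := by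
            rw [norm_smul, Real.norm_eq_abs]
            exact add_le_add le_rfl (Matrix.frobenius_norm_mul _ _)
        _ ≤ γ * (‖Uk‖ + ‖Vk‖) + Lf * δ := by
            rw [abs_of_pos hγ]
            exact add_le_add (mul_le_mul_of_nonneg_left (norm_sub_le _ _) hγ.le)
              (mul_le_mul hGkb hUk (norm_nonneg _) hLf.le)
        _ ≤ γ * (δ + δ) + Lf * δ := by
            apply add_le_add_left
            exact mul_le_mul_of_nonneg_left (add_le_add hUk hVk) hγ.le
        _ = Lf * δ + 2 * γ * δ := by ring
    rw [le_div_iff₀ hη, mul_comm]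
    exact le_trans h0 h1
  -- main estimate
  set s : ℝ := Real.sqrt (sA A) with hsdef
  have hs0 : 0 ≤ s := Real.sqrt_nonneg _
  set P : ℝ := L * δ ^ 2 + Lf + γ + (Lf * δ + 2 * γ * δ) / η * s with hPdef
  set Q : ℝ := L * δ ^ 2 + γ with hQdef
  set N : ℝ := vecNorm (fun i => lamk1 i - lamk i) with hNdef
  have hN0 : 0 ≤ N := vecNorm_nonneg _
  have hmain : η * N ≤ P * a + Q * b := by
    have h0 : η * N ≤ vecNorm ((Cmat A Uk1).mulVec (fun i => lamk1 i - lamk i)) :=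
      sigmaMin_bound hη.le hsmink1 _
    rw [vecNorm_mulVec_Cmat, key] at h0
    refine le_trans h0 ?_
    have hsumb : frobNorm (∑ i, lamk i • (A i * (Uk1 - Uk)))
        ≤ (Lf * δ + 2 * γ * δ) / η * s * a := by
      refine le_trans (frobNorm_sum_smul_le A _ lamk) ?_
      rw [frobNorm_eq]
      have : vecNorm lamk * s ≤ (Lf * δ + 2 * γ * δ) / η * s :=
        mul_le_mul_of_nonneg_right hlamk hs0
      exact mul_le_mul this le_rfl ha0 (by positivity)
    rw [frobNorm_eq]
    calc ‖γ • (Uk1 - Uk) - γ • (Vk1 - Vk) - (G1 - Gk) * Uk1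
          - Gk * (Uk1 - Uk) - (∑ i, lamk i • (A i * (Uk1 - Uk)))‖
        ≤ ‖γ • (Uk1 - Uk)‖ + ‖γ • (Vk1 - Vk)‖ + ‖(G1 - Gk) * Uk1‖
          + ‖Gk * (Uk1 - Uk)‖ + ‖(∑ i, lamk i • (A i * (Uk1 - Uk)))‖ := by
          refine le_trans (norm_sub_le _ _) ?_
          refine add_le_add ?_ le_rfl
          refine le_trans (norm_sub_le _ _) ?_
          refine add_le_add ?_ le_rfl
          refine le_trans (norm_sub_le _ _) ?_
          refine add_le_add ?_ le_rfl
          exact norm_sub_le _ _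
      _ ≤ γ * a + γ * b + L * (δ * a + δ * b) * δ + Lf * a
          + (Lf * δ + 2 * γ * δ) / η * s * a := by
          refine add_le_add (add_le_add (add_le_add (add_le_add ?_ ?_) ?_) ?_) ?_
          · rw [norm_smul, Real.norm_eq_abs, abs_of_pos hγ]
          · rw [norm_smul, Real.norm_eq_abs, abs_of_pos hγ]
          · calc ‖(G1 - Gk) * Uk1‖ ≤ ‖G1 - Gk‖ * ‖Uk1‖ := Matrix.frobenius_norm_mul _ _
              _ ≤ L * (δ * a + δ * b) * δ :=
                  mul_le_mul hG1Gk hUk1 (norm_nonneg _) (by positivity)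
          · calc ‖Gk * (Uk1 - Uk)‖ ≤ ‖Gk‖ * ‖Uk1 - Uk‖ := Matrix.frobenius_norm_mul _ _
              _ ≤ Lf * a := mul_le_mul_of_nonneg_right hGkb ha0
          · rw [← frobNorm_eq]; exact hsumb
      _ = P * a + Q * b := by rw [hPdef, hQdef]; ring
  -- conclude
  have hP0 : 0 ≤ P := by positivity
  have hQ0 : 0 ≤ Q := by positivity
  have h2 : (η * N) ^ 2 ≤ (P * a + Q * b) ^ 2 :=
    pow_le_pow_left₀ (by positivity) hmain 2
  rw [hc₁, hc₂, frobNorm_eq, frobNorm_eq]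
  have hc1P : 2 / η ^ 2 * (L * δ ^ 2 + Lf + γ + 1 / η * Lf * δ * Real.sqrt (sA A)
      + 2 / η * γ * δ * Real.sqrt (sA A)) ^ 2 = 2 / η ^ 2 * P ^ 2 := by
    rw [hPdef, hsdef]; ring
  rw [hc1P]
  have hη2 : (0:ℝ) < η ^ 2 := by positivity
  rw [show 2 / η ^ 2 * P ^ 2 * a ^ 2 + 2 / η ^ 2 * Q ^ 2 * b ^ 2
      = (2 * P ^ 2 * a ^ 2 + 2 * Q ^ 2 * b ^ 2) / η ^ 2 from by ring, le_div_iff₀ hη2]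
  nlinarith [h2, sq_nonneg (P * a - Q * b)]
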